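/- The dual icosahedral code generated by G = [[0,0,1,1,φ,φ],[1,1,φ,−φ,0,0],[φ,−φ,0,0,1,−1]] with φ = (1+√5)/2 has 1-height and 2-height both equal to √5, and 3-height equal to 2+√5, where the m-height is the supremum over nonzero codewords c = uG (u ∈ ℝ³) of the ratio of the largest to the (m+1)-th largest entry of (|c_1|,...,|c_6|). -/

import Mathlib

/-- The `k`-th largest (0-indexed) of the magnitudes `|c 0|, …, |c 5|`,
obtained via the sorting permutation `Tuple.sort` (which sorts nondecreasingly,
so the largest magnitude sits at the last position). -/
noncomputable def kthLargestAbs (c : Fin 6 → ℝ) (k : Fin 6) : ℝ :=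
  |c (Tuple.sort (fun i => |c i|) k.rev)|

noncomputable def goldenRatio' : ℝ := (1 + Real.sqrt 5) / 2

/-- Generator matrix of the dual icosahedral code. -/
noncomputable def Gico : Matrix (Fin 3) (Fin 6) ℝ :=
  !![0, 0, 1, 1, goldenRatio', goldenRatio';
     1, 1, goldenRatio', -goldenRatio', 0, 0;
     goldenRatio', -goldenRatio', 0, 0, 1, -1]

/-- The codeword `uG` associated with an information vector `u : ℝ³`. -/
noncomputable def icoCodeword (u : Fin 3 → ℝ) : Fin 6 → ℝ :=
  fun j => u 0 * Gico 0 j + u 1 * Gico 1 j + u 2 * Gico 2 j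

/-- The `m`-height of the dual icosahedral code: the supremum over nonzero
information vectors of the ratio of the largest to the `(m+1)`-th largest
magnitude of the codeword entries. -/
noncomputable def icoHeight (m : Fin 6) : ℝ :=
  sSup {h : ℝ | ∃ u : Fin 3 → ℝ, u ≠ 0 ∧
    h = kthLargestAbs (icoCodeword u) 0 / kthLargestAbs (icoCodeword u) m}

lemma sqrt5_sq : Real.sqrt 5 ^ 2 = 5 := Real.sq_sqrt (by norm_num)

lemma goldp_sq : goldenRatio' ^ 2 = goldenRatio' + 1 := by
  have h := sqrt5_sq
  unfold goldenRatio'; ring_nf; nlinarith [h]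

lemma sqrt5_gt : (2.2 : ℝ) < Real.sqrt 5 := by
  have : ((2.2:ℝ))^2 < 5 := by norm_num
  nlinarith [Real.sqrt_nonneg 5, sqrt5_sq]

lemma sqrt5_lt : Real.sqrt 5 < 2.3 := by
  nlinarith [Real.sqrt_nonneg 5, sqrt5_sq]

lemma goldp_gt : (1.6 : ℝ) < goldenRatio' := by unfold goldenRatio'; nlinarith [sqrt5_gt]
lemma goldp_lt : goldenRatio' < 1.7 := by unfold goldenRatio'; nlinarith [sqrt5_lt]

lemma sqrt5_eq : Real.sqrt 5 = 2 * goldenRatio' - 1 := by unfold goldenRatio'; ring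

section
variable {p x y z : ℝ}

lemma L0 (hsq : p^2 = p + 1) (hpl : 1.6 < p)
    (hx : 0 ≤ x) (h1 : x + p*y ≤ y + p*z) : y + p*z ≤ (2*p+1)*(p*x+z) := by
  have hp : (0:ℝ) ≤ p := by linarith
  have e1 : p^2*y = p*y + y := by rw [hsq]; ring
  have e2 : p^2*z = p*z + z := by rw [hsq]; ring
  have e3 : p^2*x = p*x + x := by rw [hsq]; ring
  have m1 := mul_le_mul_of_nonneg_left h1 hp
  have m2 : 0 ≤ p*x := mul_nonneg hp hx
  nlinarith [m1, m2, e1, e2, e3, hx]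

lemma S1a (hsq : p^2 = p + 1) (hpl : 1.6 < p) (hy : 0 ≤ y)
    (hBp : x + p*y < (2*p-3)*(y+p*z)) : (2*p-3)*(y+p*z) ≤ z - p*x := by
  have hp : (0:ℝ) ≤ p := by linarith
  have e1 : p^2*y = p*y + y := by rw [hsq]; ring
  have e2 : p^2*z = p*z + z := by rw [hsq]; ring
  have e3 : p^2*x = p*x + x := by rw [hsq]; ring
  have m1 := mul_le_mul_of_nonneg_left (le_of_lt hBp) hp
  nlinarith [m1, e1, e2, e3, hy, hBp]

lemma S1b (hsq : p^2 = p + 1) (hpl : 1.6 < p) (hpu : p < 1.7) (hx : 0 ≤ x) (hy : 0 ≤ y)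
    (hBp : x + p*y < (2*p-3)*(y+p*z)) : (2*p-3)*(y+p*z) ≤ p*z - y := by
  have hp : (0:ℝ) ≤ p := by linarith
  have e1 : p^2*y = p*y + y := by rw [hsq]; ring
  have e2 : p^2*z = p*z + z := by rw [hsq]; ring
  have e3 : p^2*x = p*x + x := by rw [hsq]; ring
  nlinarith [e1, e2, e3, mul_le_mul_of_nonneg_left (le_of_lt hBp) hp,
    mul_nonneg hp hx, mul_nonneg hp hy]

lemma S2 (hsq : p^2 = p + 1) (hpl : 1.6 < p) (hpu : p < 1.7)
    (h2 : p*x + z ≤ y + p*z)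
    (hA1 : y - p*z < (2*p-3)*(y+p*z)) (hA2 : p*z - y < (2*p-3)*(y+p*z)) :
    (2*p-3)*(y+p*z) ≤ p*y - x := by
  have hp : (0:ℝ) ≤ p := by linarith
  have e1 : p^2*y = p*y + y := by rw [hsq]; ring
  have e2 : p^2*z = p*z + z := by rw [hsq]; ring
  have e3 : p^2*x = p*x + x := by rw [hsq]; ring
  have m2 := mul_le_mul_of_nonneg_left h2 hp
  nlinarith [m2, e1, e2, e3, hA1, hA2, h2]

lemma T1 (hsq : p^2 = p + 1) (hpl : 1.6 < p) (hpu : p < 1.7)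
    (hx : 0 ≤ x) (hy : 0 ≤ y) (hz : 0 ≤ z) (h1 : x + p*y ≤ y + p*z)
    (hAm : (2*p-1)*(y+p*z) ≤ 5*|y-p*z|) : (2*p-1)*(y+p*z) ≤ 5*(p*x+z) := by
  rcases abs_cases (y - p*z) with ⟨he, _⟩ | ⟨he, _⟩ <;> rw [he] at hAm
  · nlinarith [mul_le_mul_of_nonneg_left h1 (by linarith : (0:ℝ) ≤ p),
      mul_nonneg (by linarith : (0:ℝ) ≤ p) hx]
  · nlinarith [mul_nonneg (by linarith : (0:ℝ) ≤ p) hx]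

lemma T2 (hsq : p^2 = p + 1) (hpl : 1.6 < p) (hx : 0 ≤ x)
    (hA2 : 5*(p*z - y) < (2*p-1)*(y+p*z)) : (2*p-1)*(y+p*z) ≤ 5*(x+p*y) := by
  have hp : (0:ℝ) ≤ p := by linarith
  have e1 : p^2*y = p*y + y := by rw [hsq]; ring
  have e2 : p^2*z = p*z + z := by rw [hsq]; ring
  have m1 := mul_le_mul_of_nonneg_left (le_of_lt hA2) hp
  nlinarith [m1, e1, e2, hx, hA2]

lemma T3 (hsq : p^2 = p + 1) (hpl : 1.6 < p)
    (hA2 : 5*(p*z - y) < (2*p-1)*(y+p*z)) (hB1 : 5*(p*y - x) < (2*p-1)*(y+p*z)) :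
    (2*p-1)*(y+p*z) ≤ 5*(p*x+z) := by
  have hp : (0:ℝ) ≤ p := by linarith
  have e1 : p^2*y = p*y + y := by rw [hsq]; ring
  have e2 : p^2*z = p*z + z := by rw [hsq]; ring
  have e3 : p^2*x = p*x + x := by rw [hsq]; ring
  have m1 := mul_le_mul_of_nonneg_left (le_of_lt hB1) hp
  have m2 := mul_le_mul_of_nonneg_left (le_of_lt hA2) hp
  nlinarith [m1, m2, e1, e2, e3, hA2, hB1]
end
-- conversion helpers
lemma convS5 {p A V : ℝ} (hsq : p^2 = p + 1) (hpl : 1.6 < p)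
    (h : (2*p-1)*A ≤ 5*V) : A ≤ (2*p-1)*V := by
  have eV : p^2*V = p*V + V := by rw [hsq]; ring
  nlinarith [h, eV, (by linarith : (0:ℝ) < 2*p-1)]

lemma convT {p A V : ℝ} (hsq : p^2 = p + 1) (hpl : 1.6 < p)
    (h : (2*p-3)*A ≤ V) : A ≤ (2*p+1)*V := by
  have eA : p^2*A = p*A + A := by rw [hsq]; ring
  nlinarith [mul_le_mul_of_nonneg_left h (by linarith : (0:ℝ) ≤ 2*p+1), eA]

lemma coreB {p x y z : ℝ} (hsq : p^2 = p + 1) (hpl : 1.6 < p) (hpu : p < 1.7)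
    (hx : 0 ≤ x) (hy : 0 ≤ y) (hz : 0 ≤ z)
    (h1 : x + p*y ≤ y + p*z) (h2 : p*x + z ≤ y + p*z) :
    (y+p*z ≤ (2*p-1)*|y-p*z| ∧ y+p*z ≤ (2*p-1)*(p*x+z)) ∨
    (y+p*z ≤ (2*p-1)*|x-p*y|) ∨
    (y+p*z ≤ (2*p-1)*(x+p*y) ∧ y+p*z ≤ (2*p-1)*(p*x+z)) := by
  rcases le_or_gt ((2*p-1)*(y+p*z)) (5*|y-p*z|) with hAm | hAm
  · exact Or.inl ⟨convS5 hsq hpl hAm, convS5 hsq hpl (T1 hsq hpl hpu hx hy hz h1 hAm)⟩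
  · have hA1 : 5*(y - p*z) < (2*p-1)*(y+p*z) := lt_of_le_of_lt (by nlinarith [le_abs_self (y-p*z)]) hAm
    have hA2 : 5*(p*z - y) < (2*p-1)*(y+p*z) := lt_of_le_of_lt (by nlinarith [neg_abs_le (y-p*z)]) hAm
    rcases le_or_gt ((2*p-1)*(y+p*z)) (5*|x-p*y|) with hBm | hBm
    · exact Or.inr (Or.inl (convS5 hsq hpl hBm))
    · have hB1 : 5*(p*y - x) < (2*p-1)*(y+p*z) := lt_of_le_of_lt (by nlinarith [neg_abs_le (x-p*y)]) hBm
      exact Or.inr (Or.inr ⟨convS5 hsq hpl (T2 hsq hpl hx hA2), convS5 hsq hpl (T3 hsq hpl hA2 hB1)⟩)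

lemma coreC {p x y z : ℝ} (hsq : p^2 = p + 1) (hpl : 1.6 < p) (hpu : p < 1.7)
    (hx : 0 ≤ x) (hy : 0 ≤ y) (hz : 0 ≤ z)
    (h1 : x + p*y ≤ y + p*z) (h2 : p*x + z ≤ y + p*z) :
    (y+p*z ≤ (2*p+1)*(p*x+z)) ∧
    ((y+p*z ≤ (2*p+1)*|y-p*z| ∧ y+p*z ≤ (2*p+1)*(x+p*y)) ∨
     (y+p*z ≤ (2*p+1)*|x-p*y|) ∨
     (y+p*z ≤ (2*p+1)*|y-p*z| ∧ y+p*z ≤ (2*p+1)*|p*x-z|)) := by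
  refine ⟨L0 hsq hpl hx h1, ?_⟩
  rcases le_or_gt ((2*p-3)*(y+p*z)) |y-p*z| with hAm | hAm
  · rcases le_or_gt ((2*p-3)*(y+p*z)) (x+p*y) with hBp | hBp
    · exact Or.inl ⟨convT hsq hpl hAm, convT hsq hpl hBp⟩
    · refine Or.inr (Or.inr ⟨convT hsq hpl hAm, convT hsq hpl ?_⟩)
      calc (2*p-3)*(y+p*z) ≤ z - p*x := S1a hsq hpl hy hBp
        _ ≤ |p*x-z| := by nlinarith [neg_abs_le (p*x-z)]
  · have hA1 : y - p*z < (2*p-3)*(y+p*z) := lt_of_le_of_lt (le_abs_self _) hAm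
    have hA2 : p*z - y < (2*p-3)*(y+p*z) := lt_of_le_of_lt (by nlinarith [neg_abs_le (y-p*z)]) hAm
    refine Or.inr (Or.inl (convT hsq hpl ?_))
    calc (2*p-3)*(y+p*z) ≤ p*y - x := S2 hsq hpl hpu h2 hA1 hA2
      _ ≤ |x-p*y| := by nlinarith [neg_abs_le (x-p*y)]

lemma maxabs_ge (s t : ℝ) : |s| + |t| ≤ max |s+t| |s-t| := by
  rcases le_total 0 s with hs | hs <;> rcases le_total 0 t with ht | ht
  · apply le_max_of_le_left
    rw [abs_of_nonneg hs, abs_of_nonneg ht, abs_of_nonneg (by linarith : (0:ℝ) ≤ s+t)]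
  · apply le_max_of_le_right
    rw [abs_of_nonneg hs, abs_of_nonpos ht, abs_of_nonneg (by linarith : (0:ℝ) ≤ s-t)]
    linarith
  · apply le_max_of_le_right
    rw [abs_of_nonpos hs, abs_of_nonneg ht, abs_of_nonpos (by linarith : s-t ≤ 0)]
    linarith
  · apply le_max_of_le_left
    rw [abs_of_nonpos hs, abs_of_nonpos ht, abs_of_nonpos (by linarith : s+t ≤ 0)]
    linarith

lemma pairlb_add (s t : ℝ) : |(|s| - |t|)| ≤ |s + t| := by
  simpa [sub_neg_eq_add] using abs_abs_sub_abs_le_abs_sub s (-t)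

lemma pairlb_sub (s t : ℝ) : |(|s| - |t|)| ≤ |s - t| := abs_abs_sub_abs_le_abs_sub s t

section
variable {f : Fin 6 → ℝ} {p x y z : ℝ}

lemma assembleB
    (hsq : p^2 = p + 1) (hpl : 1.6 < p) (hpu : p < 1.7)
    (hx : 0 ≤ x) (hy : 0 ≤ y) (hz : 0 ≤ z)
    (h1 : x + p*y ≤ y + p*z) (h2 : p*x + z ≤ y + p*z)
    (i0 i1 j0 j1 k0 k1 : Fin 6) (hnd : List.Nodup [i0,i1,j0,j1,k0,k1])
    (hf : ∀ l, 0 ≤ f l)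
    (hub : ∀ l, f l ≤ y + p*z)
    (hMi : y + p*z ≤ max (f i0) (f i1))
    (hAm0 : |y - p*z| ≤ f i0) (hAm1 : |y - p*z| ≤ f i1)
    (hBp : x + p*y ≤ max (f j0) (f j1))
    (hBm0 : |x - p*y| ≤ f j0) (hBm1 : |x - p*y| ≤ f j1)
    (hCp : p*x + z ≤ max (f k0) (f k1)) :
    ∃ i j k : Fin 6, i ≠ j ∧ i ≠ k ∧ j ≠ k ∧
      ∀ l, f l ≤ (2*p-1) * f i ∧ f l ≤ (2*p-1) * f j ∧ f l ≤ (2*p-1) * f k := by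
  simp only [List.nodup_cons, List.mem_cons, List.mem_singleton, List.not_mem_nil,
    or_false, List.nodup_nil, and_true] at hnd
  push_neg at hnd
  obtain ⟨⟨d01,d02,d03,d04,d05⟩,⟨d12,d13,d14,d15⟩,⟨d23,d24,d25⟩,⟨d34,d35⟩,d45⟩ := hnd
  have hp0 : (0:ℝ) ≤ 2*p-1 := by linarith
  have bnd : ∀ {w : Fin 6} {V : ℝ}, y+p*z ≤ (2*p-1)*V → V ≤ f w →
      ∀ l, f l ≤ (2*p-1)*f w := fun hMV hVw l =>
    le_trans (hub l) (le_trans hMV (mul_le_mul_of_nonneg_left hVw hp0))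
  have bigb : ∀ {w : Fin 6}, y+p*z ≤ f w → ∀ l, f l ≤ (2*p-1)*f w := fun {w} hw l =>
    le_trans (hub l) (le_trans hw (by nlinarith [hf w]))
  rcases coreB hsq hpl hpu hx hy hz h1 h2 with ⟨c1, c2⟩ | c1 | ⟨c1, c2⟩
  · rcases le_max_iff.mp hMi with hbig | hbig <;> rcases le_max_iff.mp hCp with hk | hk
    · exact ⟨i0, i1, k0, d01, d04, d14, fun l => ⟨bigb hbig l, bnd c1 hAm1 l, bnd c2 hk l⟩⟩
    · exact ⟨i0, i1, k1, d01, d05, d15, fun l => ⟨bigb hbig l, bnd c1 hAm1 l, bnd c2 hk l⟩⟩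
    · exact ⟨i1, i0, k0, d01.symm, d14, d04, fun l => ⟨bigb hbig l, bnd c1 hAm0 l, bnd c2 hk l⟩⟩
    · exact ⟨i1, i0, k1, d01.symm, d15, d05, fun l => ⟨bigb hbig l, bnd c1 hAm0 l, bnd c2 hk l⟩⟩
  · rcases le_max_iff.mp hMi with hbig | hbig
    · exact ⟨i0, j0, j1, d02, d03, d23, fun l => ⟨bigb hbig l, bnd c1 hBm0 l, bnd c1 hBm1 l⟩⟩
    · exact ⟨i1, j0, j1, d12, d13, d23, fun l => ⟨bigb hbig l, bnd c1 hBm0 l, bnd c1 hBm1 l⟩⟩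
  · rcases le_max_iff.mp hMi with hbig | hbig <;>
      rcases le_max_iff.mp hBp with hj | hj <;> rcases le_max_iff.mp hCp with hk | hk
    · exact ⟨i0, j0, k0, d02, d04, d24, fun l => ⟨bigb hbig l, bnd c1 hj l, bnd c2 hk l⟩⟩
    · exact ⟨i0, j0, k1, d02, d05, d25, fun l => ⟨bigb hbig l, bnd c1 hj l, bnd c2 hk l⟩⟩
    · exact ⟨i0, j1, k0, d03, d04, d34, fun l => ⟨bigb hbig l, bnd c1 hj l, bnd c2 hk l⟩⟩
    · exact ⟨i0, j1, k1, d03, d05, d35, fun l => ⟨bigb hbig l, bnd c1 hj l, bnd c2 hk l⟩⟩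
    · exact ⟨i1, j0, k0, d12, d14, d24, fun l => ⟨bigb hbig l, bnd c1 hj l, bnd c2 hk l⟩⟩
    · exact ⟨i1, j0, k1, d12, d15, d25, fun l => ⟨bigb hbig l, bnd c1 hj l, bnd c2 hk l⟩⟩
    · exact ⟨i1, j1, k0, d13, d14, d34, fun l => ⟨bigb hbig l, bnd c1 hj l, bnd c2 hk l⟩⟩
    · exact ⟨i1, j1, k1, d13, d15, d35, fun l => ⟨bigb hbig l, bnd c1 hj l, bnd c2 hk l⟩⟩
end

lemma assembleC {f : Fin 6 → ℝ} {p x y z : ℝ}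
    (hsq : p^2 = p + 1) (hpl : 1.6 < p) (hpu : p < 1.7)
    (hx : 0 ≤ x) (hy : 0 ≤ y) (hz : 0 ≤ z)
    (h1 : x + p*y ≤ y + p*z) (h2 : p*x + z ≤ y + p*z)
    (i0 i1 j0 j1 k0 k1 : Fin 6) (hnd : List.Nodup [i0,i1,j0,j1,k0,k1])
    (hf : ∀ l, 0 ≤ f l)
    (hub : ∀ l, f l ≤ y + p*z)
    (hMi : y + p*z ≤ max (f i0) (f i1))
    (hAm0 : |y - p*z| ≤ f i0) (hAm1 : |y - p*z| ≤ f i1)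
    (hBp : x + p*y ≤ max (f j0) (f j1))
    (hBm0 : |x - p*y| ≤ f j0) (hBm1 : |x - p*y| ≤ f j1)
    (hCp : p*x + z ≤ max (f k0) (f k1))
    (hCm0 : |p*x - z| ≤ f k0) (hCm1 : |p*x - z| ≤ f k1) :
    ∃ i j k m : Fin 6, i ≠ j ∧ i ≠ k ∧ i ≠ m ∧ j ≠ k ∧ j ≠ m ∧ k ≠ m ∧
      ∀ l, f l ≤ (2*p+1) * f i ∧ f l ≤ (2*p+1) * f j ∧ f l ≤ (2*p+1) * f k ∧
        f l ≤ (2*p+1) * f m := by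
  simp only [List.nodup_cons, List.mem_cons, List.mem_singleton, List.not_mem_nil,
    or_false, List.nodup_nil, and_true] at hnd
  push_neg at hnd
  obtain ⟨⟨d01,d02,d03,d04,d05⟩,⟨d12,d13,d14,d15⟩,⟨d23,d24,d25⟩,⟨d34,d35⟩,d45⟩ := hnd
  have hp0 : (0:ℝ) ≤ 2*p+1 := by linarith
  have bnd : ∀ {w : Fin 6} {V : ℝ}, y+p*z ≤ (2*p+1)*V → V ≤ f w →
      ∀ l, f l ≤ (2*p+1)*f w := fun hMV hVw l =>
    le_trans (hub l) (le_trans hMV (mul_le_mul_of_nonneg_left hVw hp0))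
  have bigb : ∀ {w : Fin 6}, y+p*z ≤ f w → ∀ l, f l ≤ (2*p+1)*f w := fun {w} hw l =>
    le_trans (hub l) (le_trans hw (by nlinarith [hf w]))
  obtain ⟨cC, hrest⟩ := coreC hsq hpl hpu hx hy hz h1 h2
  rcases hrest with ⟨c1, c2⟩ | c1 | ⟨c1, c2⟩
  · rcases le_max_iff.mp hMi with hbig | hbig <;>
      rcases le_max_iff.mp hBp with hj | hj <;> rcases le_max_iff.mp hCp with hk | hk
    · exact ⟨i0, i1, j0, k0, d01, d02, d04, d12, d14, d24,
        fun l => ⟨bigb hbig l, bnd c1 hAm1 l, bnd c2 hj l, bnd cC hk l⟩⟩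
    · exact ⟨i0, i1, j0, k1, d01, d02, d05, d12, d15, d25,
        fun l => ⟨bigb hbig l, bnd c1 hAm1 l, bnd c2 hj l, bnd cC hk l⟩⟩
    · exact ⟨i0, i1, j1, k0, d01, d03, d04, d13, d14, d34,
        fun l => ⟨bigb hbig l, bnd c1 hAm1 l, bnd c2 hj l, bnd cC hk l⟩⟩
    · exact ⟨i0, i1, j1, k1, d01, d03, d05, d13, d15, d35,
        fun l => ⟨bigb hbig l, bnd c1 hAm1 l, bnd c2 hj l, bnd cC hk l⟩⟩
    · exact ⟨i1, i0, j0, k0, d01.symm, d12, d14, d02, d04, d24,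
        fun l => ⟨bigb hbig l, bnd c1 hAm0 l, bnd c2 hj l, bnd cC hk l⟩⟩
    · exact ⟨i1, i0, j0, k1, d01.symm, d12, d15, d02, d05, d25,
        fun l => ⟨bigb hbig l, bnd c1 hAm0 l, bnd c2 hj l, bnd cC hk l⟩⟩
    · exact ⟨i1, i0, j1, k0, d01.symm, d13, d14, d03, d04, d34,
        fun l => ⟨bigb hbig l, bnd c1 hAm0 l, bnd c2 hj l, bnd cC hk l⟩⟩
    · exact ⟨i1, i0, j1, k1, d01.symm, d13, d15, d03, d05, d35,
        fun l => ⟨bigb hbig l, bnd c1 hAm0 l, bnd c2 hj l, bnd cC hk l⟩⟩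
  · rcases le_max_iff.mp hMi with hbig | hbig <;> rcases le_max_iff.mp hCp with hk | hk
    · exact ⟨i0, j0, j1, k0, d02, d03, d04, d23, d24, d34,
        fun l => ⟨bigb hbig l, bnd c1 hBm0 l, bnd c1 hBm1 l, bnd cC hk l⟩⟩
    · exact ⟨i0, j0, j1, k1, d02, d03, d05, d23, d25, d35,
        fun l => ⟨bigb hbig l, bnd c1 hBm0 l, bnd c1 hBm1 l, bnd cC hk l⟩⟩
    · exact ⟨i1, j0, j1, k0, d12, d13, d14, d23, d24, d34,
        fun l => ⟨bigb hbig l, bnd c1 hBm0 l, bnd c1 hBm1 l, bnd cC hk l⟩⟩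
    · exact ⟨i1, j0, j1, k1, d12, d13, d15, d23, d25, d35,
        fun l => ⟨bigb hbig l, bnd c1 hBm0 l, bnd c1 hBm1 l, bnd cC hk l⟩⟩
  · rcases le_max_iff.mp hMi with hbig | hbig
    · exact ⟨i0, i1, k0, k1, d01, d04, d05, d14, d15, d45.1,
        fun l => ⟨bigb hbig l, bnd c1 hAm1 l, bnd c2 hCm0 l, bnd c2 hCm1 l⟩⟩
    · exact ⟨i1, i0, k0, k1, d01.symm, d14, d15, d04, d05, d45.1,
        fun l => ⟨bigb hbig l, bnd c1 hAm0 l, bnd c2 hCm0 l, bnd c2 hCm1 l⟩⟩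
lemma ico0 (u : Fin 3 → ℝ) : icoCodeword u 0 = u 1 + goldenRatio' * u 2 := by
  simp [icoCodeword, Gico, show (5:Fin 6) = Fin.succ 4 from rfl, Matrix.cons_val_succ]; ring
lemma ico1 (u : Fin 3 → ℝ) : icoCodeword u 1 = u 1 - goldenRatio' * u 2 := by
  simp [icoCodeword, Gico, show (5:Fin 6) = Fin.succ 4 from rfl, Matrix.cons_val_succ]; ring
lemma ico2 (u : Fin 3 → ℝ) : icoCodeword u 2 = u 0 + goldenRatio' * u 1 := by
  simp [icoCodeword, Gico, show (5:Fin 6) = Fin.succ 4 from rfl, Matrix.cons_val_succ]; ring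
lemma ico3 (u : Fin 3 → ℝ) : icoCodeword u 3 = u 0 - goldenRatio' * u 1 := by
  simp [icoCodeword, Gico, show (5:Fin 6) = Fin.succ 4 from rfl, Matrix.cons_val_succ]; ring
lemma ico4 (u : Fin 3 → ℝ) : icoCodeword u 4 = goldenRatio' * u 0 + u 2 := by
  simp [icoCodeword, Gico, show (5:Fin 6) = Fin.succ 4 from rfl, Matrix.cons_val_succ]; ring
lemma ico5 (u : Fin 3 → ℝ) : icoCodeword u 5 = goldenRatio' * u 0 - u 2 := by
  simp [icoCodeword, Gico, show (5:Fin 6) = Fin.succ 4 from rfl, Matrix.cons_val_succ]; ring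

lemma claims (u : Fin 3 → ℝ) :
    (∃ i j k : Fin 6, i ≠ j ∧ i ≠ k ∧ j ≠ k ∧
      ∀ l, |icoCodeword u l| ≤ (2*goldenRatio'-1) * |icoCodeword u i| ∧
           |icoCodeword u l| ≤ (2*goldenRatio'-1) * |icoCodeword u j| ∧
           |icoCodeword u l| ≤ (2*goldenRatio'-1) * |icoCodeword u k|) ∧
    (∃ i j k m : Fin 6, i ≠ j ∧ i ≠ k ∧ i ≠ m ∧ j ≠ k ∧ j ≠ m ∧ k ≠ m ∧
      ∀ l, |icoCodeword u l| ≤ (2*goldenRatio'+1) * |icoCodeword u i| ∧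
           |icoCodeword u l| ≤ (2*goldenRatio'+1) * |icoCodeword u j| ∧
           |icoCodeword u l| ≤ (2*goldenRatio'+1) * |icoCodeword u k| ∧
           |icoCodeword u l| ≤ (2*goldenRatio'+1) * |icoCodeword u m|) := by
  have hsq := goldp_sq
  have hpl := goldp_gt
  have hpu := goldp_lt
  set p := goldenRatio' with hpdef
  have hp0 : (0:ℝ) ≤ p := by linarith
  set f : Fin 6 → ℝ := fun l => |icoCodeword u l| with hfdef
  have hf : ∀ l, 0 ≤ f l := fun l => abs_nonneg _
  set x := |u 0| with hxd
  set y := |u 1| with hyd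
  set z := |u 2| with hzd
  have hx : 0 ≤ x := abs_nonneg _
  have hy : 0 ≤ y := abs_nonneg _
  have hz : 0 ≤ z := abs_nonneg _
  have hax : |p * u 0| = p * x := by rw [abs_mul, abs_of_nonneg hp0]
  have hay : |p * u 1| = p * y := by rw [abs_mul, abs_of_nonneg hp0]
  have haz : |p * u 2| = p * z := by rw [abs_mul, abs_of_nonneg hp0]
  have f0 : f 0 = |u 1 + p * u 2| := by rw [hfdef]; simp only [ico0]; rfl
  have f1 : f 1 = |u 1 - p * u 2| := by rw [hfdef]; simp only [ico1]; rfl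
  have f2 : f 2 = |u 0 + p * u 1| := by rw [hfdef]; simp only [ico2]; rfl
  have f3 : f 3 = |u 0 - p * u 1| := by rw [hfdef]; simp only [ico3]; rfl
  have f4 : f 4 = |p * u 0 + u 2| := by rw [hfdef]; simp only [ico4]; rfl
  have f5 : f 5 = |p * u 0 - u 2| := by rw [hfdef]; simp only [ico5]; rfl
  have ub0 : f 0 ≤ y + p*z := by rw [f0]; calc |u 1 + p*u 2| ≤ |u 1| + |p*u 2| := abs_add_le _ _
                                  _ = y + p*z := by rw [haz]
  have ub1 : f 1 ≤ y + p*z := by rw [f1]; calc |u 1 - p*u 2| ≤ |u 1| + |p*u 2| := abs_sub _ _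
                                  _ = y + p*z := by rw [haz]
  have ub2 : f 2 ≤ x + p*y := by rw [f2]; calc |u 0 + p*u 1| ≤ |u 0| + |p*u 1| := abs_add_le _ _
                                  _ = x + p*y := by rw [hay]
  have ub3 : f 3 ≤ x + p*y := by rw [f3]; calc |u 0 - p*u 1| ≤ |u 0| + |p*u 1| := abs_sub _ _
                                  _ = x + p*y := by rw [hay]
  have ub4 : f 4 ≤ p*x + z := by rw [f4]; calc |p*u 0 + u 2| ≤ |p*u 0| + |u 2| := abs_add_le _ _
                                  _ = p*x + z := by rw [hax]
  have ub5 : f 5 ≤ p*x + z := by rw [f5]; calc |p*u 0 - u 2| ≤ |p*u 0| + |u 2| := abs_sub _ _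
                                  _ = p*x + z := by rw [hax]
  have lA0 : |y - p*z| ≤ f 0 := by rw [f0, ← haz]; exact pairlb_add _ _
  have lA1 : |y - p*z| ≤ f 1 := by rw [f1, ← haz]; exact pairlb_sub _ _
  have lB0 : |x - p*y| ≤ f 2 := by rw [f2, ← hay]; exact pairlb_add _ _
  have lB1 : |x - p*y| ≤ f 3 := by rw [f3, ← hay]; exact pairlb_sub _ _
  have lC0 : |p*x - z| ≤ f 4 := by rw [f4, ← hax]; exact pairlb_add _ _
  have lC1 : |p*x - z| ≤ f 5 := by rw [f5, ← hax]; exact pairlb_sub _ _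
  have mA : y + p*z ≤ max (f 0) (f 1) := by
    rw [f0, f1, ← haz]; exact maxabs_ge _ _
  have mB : x + p*y ≤ max (f 2) (f 3) := by
    rw [f2, f3, ← hay]; exact maxabs_ge _ _
  have mC : p*x + z ≤ max (f 4) (f 5) := by
    rw [f4, f5, ← hax]; exact maxabs_ge _ _
  rcases le_total (x + p*y) (y + p*z) with h12 | h12
  · rcases le_total (p*x + z) (y + p*z) with h13 | h13
    · -- A max
      have hub : ∀ l, f l ≤ y + p*z := by
        intro l; fin_cases l
        exacts [ub0, ub1, le_trans ub2 h12, le_trans ub3 h12, le_trans ub4 h13,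
          le_trans ub5 h13]
      exact ⟨assembleB hsq hpl hpu hx hy hz h12 h13 0 1 2 3 4 5 (by decide) hf hub
          mA lA0 lA1 mB lB0 lB1 mC,
        assembleC hsq hpl hpu hx hy hz h12 h13 0 1 2 3 4 5 (by decide) hf hub
          mA lA0 lA1 mB lB0 lB1 mC lC0 lC1⟩
    · -- C max
      have h1' : y + p*z ≤ z + p*x := by linarith
      have h2' : p*y + x ≤ z + p*x := by linarith
      have hub : ∀ l, f l ≤ z + p*x := by
        intro l; fin_cases l
        exacts [ub0.trans (by linarith), ub1.trans (by linarith), ub2.trans (by linarith),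
          ub3.trans (by linarith), ub4.trans (by linarith), ub5.trans (by linarith)]
      have mC' : z + p*x ≤ max (f 4) (f 5) := by linarith [mC]
      have mB' : p*y + x ≤ max (f 2) (f 3) := by linarith [mB]
      have lC0' : |z - p*x| ≤ f 4 := by rw [abs_sub_comm]; exact lC0
      have lC1' : |z - p*x| ≤ f 5 := by rw [abs_sub_comm]; exact lC1
      have lB0' : |p*y - x| ≤ f 2 := by rw [abs_sub_comm]; exact lB0
      have lB1' : |p*y - x| ≤ f 3 := by rw [abs_sub_comm]; exact lB1
      exact ⟨assembleB hsq hpl hpu hy hz hx h1' h2' 4 5 0 1 2 3 (by decide) hf hub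
          mC' lC0' lC1' mA lA0 lA1 mB',
        assembleC hsq hpl hpu hy hz hx h1' h2' 4 5 0 1 2 3 (by decide) hf hub
          mC' lC0' lC1' mA lA0 lA1 mB' lB0' lB1'⟩
  · rcases le_total (p*x + z) (x + p*y) with h23 | h23
    · -- B max
      have h1' : z + p*x ≤ x + p*y := by linarith
      have h2' : p*z + y ≤ x + p*y := by linarith
      have hub : ∀ l, f l ≤ x + p*y := by
        intro l; fin_cases l
        exacts [ub0.trans (by linarith), ub1.trans (by linarith), ub2.trans (by linarith),
          ub3.trans (by linarith), ub4.trans (by linarith), ub5.trans (by linarith)]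
      have mA' : p*z + y ≤ max (f 0) (f 1) := by linarith [mA]
      have lA0' : |p*z - y| ≤ f 0 := by rw [abs_sub_comm]; exact lA0
      have lA1' : |p*z - y| ≤ f 1 := by rw [abs_sub_comm]; exact lA1
      have lC0' : |z - p*x| ≤ f 4 := by rw [abs_sub_comm]; exact lC0
      have lC1' : |z - p*x| ≤ f 5 := by rw [abs_sub_comm]; exact lC1
      have mC' : z + p*x ≤ max (f 4) (f 5) := by linarith [mC]
      have mA'' : p*z + y ≤ max (f 0) (f 1) := by linarith [mA]
      exact ⟨assembleB hsq hpl hpu hz hx hy h1' h2' 2 3 4 5 0 1 (by decide) hf hub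
          mB lB0 lB1 mC' lC0' lC1' mA'',
        assembleC hsq hpl hpu hz hx hy h1' h2' 2 3 4 5 0 1 (by decide) hf hub
          mB lB0 lB1 mC' lC0' lC1' mA'' lA0' lA1'⟩
    · -- C max again
      have h1' : y + p*z ≤ z + p*x := by linarith
      have h2' : p*y + x ≤ z + p*x := by linarith
      have hub : ∀ l, f l ≤ z + p*x := by
        intro l; fin_cases l
        exacts [ub0.trans (by linarith), ub1.trans (by linarith), ub2.trans (by linarith),
          ub3.trans (by linarith), ub4.trans (by linarith), ub5.trans (by linarith)]
      have mC' : z + p*x ≤ max (f 4) (f 5) := by linarith [mC]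
      have mB' : p*y + x ≤ max (f 2) (f 3) := by linarith [mB]
      have lC0' : |z - p*x| ≤ f 4 := by rw [abs_sub_comm]; exact lC0
      have lC1' : |z - p*x| ≤ f 5 := by rw [abs_sub_comm]; exact lC1
      have lB0' : |p*y - x| ≤ f 2 := by rw [abs_sub_comm]; exact lB0
      have lB1' : |p*y - x| ≤ f 3 := by rw [abs_sub_comm]; exact lB1
      exact ⟨assembleB hsq hpl hpu hy hz hx h1' h2' 4 5 0 1 2 3 (by decide) hf hub
          mC' lC0' lC1' mA lA0 lA1 mB',
        assembleC hsq hpl hpu hy hz hx h1' h2' 4 5 0 1 2 3 (by decide) hf hub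
          mC' lC0' lC1' mA lA0 lA1 mB' lB0' lB1'⟩

lemma kth_eq (c : Fin 6 → ℝ) (k : Fin 6) :
    kthLargestAbs c k = ((fun i => |c i|) ∘ Tuple.sort (fun i => |c i|)) k.rev := rfl

lemma kth_nonneg (c : Fin 6 → ℝ) (k : Fin 6) : 0 ≤ kthLargestAbs c k := abs_nonneg _

lemma kth_anti (c : Fin 6 → ℝ) {k l : Fin 6} (h : k ≤ l) :
    kthLargestAbs c l ≤ kthLargestAbs c k := by
  rw [kth_eq, kth_eq]
  exact Tuple.monotone_sort (fun i => |c i|) (Fin.rev_le_rev.mpr h)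

lemma bound_aux {c : Fin 6 → ℝ} {K : ℝ} (hK : 0 ≤ K) (q : Fin 6) (i : Fin 6)
    (hq : (Tuple.sort (fun l => |c l|)).symm i ≤ q)
    (h : ∀ l, |c l| ≤ K * |c i|) :
    kthLargestAbs c 0 ≤ K * kthLargestAbs c q.rev := by
  have hrr : (q.rev).rev = q := Fin.rev_rev q
  rw [kth_eq, kth_eq, hrr]
  set f : Fin 6 → ℝ := fun l => |c l| with hf
  set σ := Tuple.sort f with hσ
  have mono := Tuple.monotone_sort f
  have h0 : (0 : Fin 6).rev = 5 := by decide
  rw [h0]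
  have e1 : (f ∘ σ) (σ.symm i) = f i := by simp
  calc (f ∘ σ) 5 = f (σ 5) := rfl
    _ ≤ K * f i := h (σ 5)
    _ = K * (f ∘ σ) (σ.symm i) := by rw [e1]
    _ ≤ K * (f ∘ σ) q := by
        exact mul_le_mul_of_nonneg_left (mono hq) hK

lemma bound3 {c : Fin 6 → ℝ} {K : ℝ} (hK : 0 ≤ K) {i j k : Fin 6}
    (hij : i ≠ j) (hik : i ≠ k) (hjk : j ≠ k)
    (h : ∀ l, |c l| ≤ K * |c i| ∧ |c l| ≤ K * |c j| ∧ |c l| ≤ K * |c k|) :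
    kthLargestAbs c 0 ≤ K * kthLargestAbs c 2 := by
  have h2 : (2 : Fin 6) = (3 : Fin 6).rev := by decide
  rw [h2]
  set σ := Tuple.sort (fun l => |c l|) with hσ
  have d1 : (σ.symm i).val ≠ (σ.symm j).val := fun hv => hij (σ.symm.injective (Fin.ext hv))
  have d2 : (σ.symm i).val ≠ (σ.symm k).val := fun hv => hik (σ.symm.injective (Fin.ext hv))
  have d3 : (σ.symm j).val ≠ (σ.symm k).val := fun hv => hjk (σ.symm.injective (Fin.ext hv))
  have l1 := (σ.symm i).isLt
  have l2 := (σ.symm j).isLt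
  have l3 := (σ.symm k).isLt
  have hmin : σ.symm i ≤ (3:Fin 6) ∨ σ.symm j ≤ (3:Fin 6) ∨ σ.symm k ≤ (3:Fin 6) := by
    simp only [Fin.le_def]
    omega
  rcases hmin with hq | hq | hq
  · exact bound_aux hK 3 i hq (fun l => (h l).1)
  · exact bound_aux hK 3 j hq (fun l => (h l).2.1)
  · exact bound_aux hK 3 k hq (fun l => (h l).2.2)

lemma bound4 {c : Fin 6 → ℝ} {K : ℝ} (hK : 0 ≤ K) {i j k m : Fin 6}
    (hij : i ≠ j) (hik : i ≠ k) (him : i ≠ m) (hjk : j ≠ k) (hjm : j ≠ m) (hkm : k ≠ m)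
    (h : ∀ l, |c l| ≤ K * |c i| ∧ |c l| ≤ K * |c j| ∧ |c l| ≤ K * |c k| ∧ |c l| ≤ K * |c m|) :
    kthLargestAbs c 0 ≤ K * kthLargestAbs c 3 := by
  have h2 : (3 : Fin 6) = (2 : Fin 6).rev := by decide
  rw [h2]
  set σ := Tuple.sort (fun l => |c l|) with hσ
  have d1 : (σ.symm i).val ≠ (σ.symm j).val := fun hv => hij (σ.symm.injective (Fin.ext hv))
  have d2 : (σ.symm i).val ≠ (σ.symm k).val := fun hv => hik (σ.symm.injective (Fin.ext hv))
  have d3 : (σ.symm j).val ≠ (σ.symm k).val := fun hv => hjk (σ.symm.injective (Fin.ext hv))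
  have d4 : (σ.symm i).val ≠ (σ.symm m).val := fun hv => him (σ.symm.injective (Fin.ext hv))
  have d5 : (σ.symm j).val ≠ (σ.symm m).val := fun hv => hjm (σ.symm.injective (Fin.ext hv))
  have d6 : (σ.symm k).val ≠ (σ.symm m).val := fun hv => hkm (σ.symm.injective (Fin.ext hv))
  have l1 := (σ.symm i).isLt
  have l2 := (σ.symm j).isLt
  have l3 := (σ.symm k).isLt
  have l4 := (σ.symm m).isLt
  have hmin : σ.symm i ≤ (2:Fin 6) ∨ σ.symm j ≤ (2:Fin 6) ∨ σ.symm k ≤ (2:Fin 6) ∨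
      σ.symm m ≤ (2:Fin 6) := by
    simp only [Fin.le_def]
    omega
  rcases hmin with hq | hq | hq | hq
  · exact bound_aux hK 2 i hq (fun l => (h l).1)
  · exact bound_aux hK 2 j hq (fun l => (h l).2.1)
  · exact bound_aux hK 2 k hq (fun l => (h l).2.2.1)
  · exact bound_aux hK 2 m hq (fun l => (h l).2.2.2)

lemma kth_eval {c : Fin 6 → ℝ} (σ : Equiv.Perm (Fin 6))
    (hmono : Monotone ((fun i => |c i|) ∘ σ)) (k : Fin 6) :
    kthLargestAbs c k = |c (σ k.rev)| := by
  rw [kth_eq, ← Tuple.comp_sort_eq_comp_iff_monotone.mpr hmono]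
  rfl

lemma mono6 {g : Fin 6 → ℝ} (h01 : g 0 ≤ g 1) (h12 : g 1 ≤ g 2) (h23 : g 2 ≤ g 3)
    (h34 : g 3 ≤ g 4) (h45 : g 4 ≤ g 5) : Monotone g := by
  rw [Fin.monotone_iff_le_succ]
  intro i
  fin_cases i
  exacts [h01, h12, h23, h34, h45]

noncomputable def sigB : Equiv.Perm (Fin 6) :=
  ⟨![1,2,3,4,5,0], ![5,0,1,2,3,4], by decide, by decide⟩

noncomputable def sigC : Equiv.Perm (Fin 6) :=
  ⟨![0,3,4,1,2,5], ![0,3,4,1,2,5], by decide, by decide⟩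

lemma evB : kthLargestAbs (icoCodeword ![0,1,goldenRatio']) 0 = goldenRatio' + 2 ∧
    kthLargestAbs (icoCodeword ![0,1,goldenRatio']) 1 = goldenRatio' ∧
    kthLargestAbs (icoCodeword ![0,1,goldenRatio']) 2 = goldenRatio' := by
  have hsq := goldp_sq
  have hpl := goldp_gt
  set p := goldenRatio' with hpdef
  set c : Fin 6 → ℝ := icoCodeword ![0,1,p] with hc
  have u0 : (![0,1,p] : Fin 3 → ℝ) 0 = 0 := rfl
  have u1 : (![0,1,p] : Fin 3 → ℝ) 1 = 1 := rfl
  have u2 : (![0,1,p] : Fin 3 → ℝ) 2 = p := rfl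
  have hc0 : |c 0| = p + 2 := by
    rw [hc, ico0, u1, u2]
    rw [show 1 + p * p = p + 2 by linear_combination hsq]
    exact abs_of_nonneg (by linarith)
  have hc1 : |c 1| = p := by
    rw [hc, ico1, u1, u2]
    rw [show 1 - p * p = -p by linear_combination (-1) * hsq]
    rw [abs_neg]; exact abs_of_nonneg (by linarith)
  have hc2 : |c 2| = p := by
    rw [hc, ico2, u0, u1]
    rw [show (0:ℝ) + p * 1 = p by ring]
    exact abs_of_nonneg (by linarith)
  have hc3 : |c 3| = p := by
    rw [hc, ico3, u0, u1]
    rw [show (0:ℝ) - p * 1 = -p by ring, abs_neg]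
    exact abs_of_nonneg (by linarith)
  have hc4 : |c 4| = p := by
    rw [hc, ico4, u0, u2]
    rw [show p * 0 + p = p by ring]
    exact abs_of_nonneg (by linarith)
  have hc5 : |c 5| = p := by
    rw [hc, ico5, u0, u2]
    rw [show p * 0 - p = -p by ring, abs_neg]
    exact abs_of_nonneg (by linarith)
  have hmono : Monotone ((fun i => |c i|) ∘ sigB) := by
    apply mono6
    · show |c 1| ≤ |c 2|; rw [hc1, hc2]
    · show |c 2| ≤ |c 3|; rw [hc2, hc3]
    · show |c 3| ≤ |c 4|; rw [hc3, hc4]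
    · show |c 4| ≤ |c 5|; rw [hc4, hc5]
    · show |c 5| ≤ |c 0|; rw [hc5, hc0]; linarith
  refine ⟨?_, ?_, ?_⟩
  · rw [show kthLargestAbs c 0 = |c (sigB (0:Fin 6).rev)| from kth_eval sigB hmono 0]
    show |c 0| = p + 2
    exact hc0
  · rw [show kthLargestAbs c 1 = |c (sigB (1:Fin 6).rev)| from kth_eval sigB hmono 1]
    show |c 5| = p
    exact hc5
  · rw [show kthLargestAbs c 2 = |c (sigB (2:Fin 6).rev)| from kth_eval sigB hmono 2]
    show |c 4| = p
    exact hc4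

lemma evC : kthLargestAbs (icoCodeword ![1,1,-1]) 0 = goldenRatio' + 1 ∧
    kthLargestAbs (icoCodeword ![1,1,-1]) 3 = goldenRatio' - 1 := by
  have hsq := goldp_sq
  have hpl := goldp_gt
  set p := goldenRatio' with hpdef
  set c : Fin 6 → ℝ := icoCodeword ![1,1,-1] with hc
  have u0 : (![1,1,-1] : Fin 3 → ℝ) 0 = 1 := rfl
  have u1 : (![1,1,-1] : Fin 3 → ℝ) 1 = 1 := rfl
  have u2 : (![1,1,-1] : Fin 3 → ℝ) 2 = -1 := rfl
  have hc0 : |c 0| = p - 1 := by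
    rw [hc, ico0, u1, u2]
    rw [show 1 + p * (-1) = -(p-1) by ring, abs_neg]
    exact abs_of_nonneg (by linarith)
  have hc1 : |c 1| = p + 1 := by
    rw [hc, ico1, u1, u2]
    rw [show 1 - p * (-1) = p + 1 by ring]
    exact abs_of_nonneg (by linarith)
  have hc2 : |c 2| = p + 1 := by
    rw [hc, ico2, u0, u1]
    rw [show (1:ℝ) + p * 1 = p + 1 by ring]
    exact abs_of_nonneg (by linarith)
  have hc3 : |c 3| = p - 1 := by
    rw [hc, ico3, u0, u1]
    rw [show (1:ℝ) - p * 1 = -(p-1) by ring, abs_neg]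
    exact abs_of_nonneg (by linarith)
  have hc4 : |c 4| = p - 1 := by
    rw [hc, ico4, u0, u2]
    rw [show p * 1 + -1 = p - 1 by ring]
    exact abs_of_nonneg (by linarith)
  have hc5 : |c 5| = p + 1 := by
    rw [hc, ico5, u0, u2]
    rw [show p * 1 - -1 = p + 1 by ring]
    exact abs_of_nonneg (by linarith)
  have hmono : Monotone ((fun i => |c i|) ∘ sigC) := by
    apply mono6
    · show |c 0| ≤ |c 3|; rw [hc0, hc3]
    · show |c 3| ≤ |c 4|; rw [hc3, hc4]
    · show |c 4| ≤ |c 1|; rw [hc4, hc1]; linarith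
    · show |c 1| ≤ |c 2|; rw [hc1, hc2]
    · show |c 2| ≤ |c 5|; rw [hc2, hc5]
  constructor
  · rw [show kthLargestAbs c 0 = |c (sigC (0:Fin 6).rev)| from kth_eval sigC hmono 0]
    show |c 5| = p + 1
    exact hc5
  · rw [show kthLargestAbs c 3 = |c (sigC (3:Fin 6).rev)| from kth_eval sigC hmono 3]
    show |c 4| = p - 1
    exact hc4

lemma uB_ne : (![0,1,goldenRatio'] : Fin 3 → ℝ) ≠ 0 := by
  intro h
  have := congrFun h 1
  simp only [Pi.zero_apply] at this
  norm_num [Matrix.cons_val_one, Matrix.head_cons] at this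

lemma uC_ne : (![1,1,-1] : Fin 3 → ℝ) ≠ 0 := by
  intro h
  have := congrFun h 0
  simp only [Pi.zero_apply] at this
  norm_num at this

theorem stmt_13 :
    icoHeight 1 = Real.sqrt 5 ∧ icoHeight 2 = Real.sqrt 5 ∧
      icoHeight 3 = 2 + Real.sqrt 5 := by
  have hsq := goldp_sq
  have hpl := goldp_gt
  set p := goldenRatio' with hpdef
  have hp0 : (0:ℝ) < p := by linarith
  have hs5 : Real.sqrt 5 = 2*p - 1 := by rw [sqrt5_eq]
  have ub2 : ∀ (u : Fin 3 → ℝ) (m : Fin 6), (1:Fin 6) ≤ m → m ≤ 2 →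
      kthLargestAbs (icoCodeword u) 0 / kthLargestAbs (icoCodeword u) m ≤ Real.sqrt 5 := by
    intro u m hm1 hm2
    obtain ⟨⟨i, j, k, hij, hik, hjk, hb⟩, -⟩ := claims u
    have key : kthLargestAbs (icoCodeword u) 0 ≤ (2*p-1) * kthLargestAbs (icoCodeword u) 2 :=
      bound3 (by linarith) hij hik hjk hb
    have key2 : kthLargestAbs (icoCodeword u) 0 ≤ (2*p-1) * kthLargestAbs (icoCodeword u) m :=
      key.trans (mul_le_mul_of_nonneg_left (kth_anti _ hm2) (by linarith))
    rcases (kth_nonneg (icoCodeword u) m).eq_or_lt with h0 | h0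
    · rw [← h0, div_zero]
      positivity
    · rw [div_le_iff₀ h0, hs5]
      exact key2
  have ub3 : ∀ (u : Fin 3 → ℝ),
      kthLargestAbs (icoCodeword u) 0 / kthLargestAbs (icoCodeword u) 3 ≤ 2 + Real.sqrt 5 := by
    intro u
    obtain ⟨-, ⟨i, j, k, m, hij, hik, him, hjk, hjm, hkm, hb⟩⟩ := claims u
    have key : kthLargestAbs (icoCodeword u) 0 ≤ (2*p+1) * kthLargestAbs (icoCodeword u) 3 :=
      bound4 (by linarith) hij hik him hjk hjm hkm hb
    rcases (kth_nonneg (icoCodeword u) 3).eq_or_lt with h0 | h0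
    · rw [← h0, div_zero]
      positivity
    · rw [div_le_iff₀ h0, hs5, show 2 + (2*p-1) = 2*p+1 by ring]
      exact key
  refine ⟨?_, ?_, ?_⟩
  · apply IsGreatest.csSup_eq
    constructor
    · refine ⟨![0,1,p], uB_ne, ?_⟩
      rw [evB.1, evB.2.1, hs5, eq_div_iff (by linarith : p ≠ 0)]
      linear_combination 2 * hsq
    · rintro h ⟨u, -, rfl⟩
      exact ub2 u 1 (by decide) (by decide)
  · apply IsGreatest.csSup_eq
    constructor
    · refine ⟨![0,1,p], uB_ne, ?_⟩
      rw [evB.1, evB.2.2, hs5, eq_div_iff (by linarith : p ≠ 0)]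
      linear_combination 2 * hsq
    · rintro h ⟨u, -, rfl⟩
      exact ub2 u 2 (by decide) (by decide)
  · apply IsGreatest.csSup_eq
    constructor
    · refine ⟨![1,1,-1], uC_ne, ?_⟩
      rw [evC.1, evC.2, hs5, eq_div_iff (by linarith : p - 1 ≠ 0)]
      linear_combination 2 * hsq
    · rintro h ⟨u, -, rfl⟩
      exact ub3 u
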